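/- Every Hamiltonian graph G of order n ≥ 3 satisfies rc(G) ≤ ⌈n/2⌉. -/

import Mathlib

open SimpleGraph

def IsRainbowColoring {V α : Type*} (G : SimpleGraph V) (c : Sym2 V → α) : Prop :=
  ∀ u v : V, ∃ p : G.Walk u v, p.IsPath ∧ (p.edges.map c).Nodup

noncomputable def rc {V : Type*} (G : SimpleGraph V) : ℕ :=
  sInf {t : ℕ | ∃ c : Sym2 V → Fin t, IsRainbowColoring G c}

def IsBlock {V : Type*} (G : SimpleGraph V) (B : Set V) : Prop :=
  ((G.induce B).Connected ∧ ∀ v ∈ B, B ≠ {v} → (G.induce (B \ {v})).Connected) ∧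
  ∀ B' : Set V, B ⊆ B' →
    ((G.induce B').Connected ∧ ∀ v ∈ B', B' ≠ {v} → (G.induce (B' \ {v})).Connected) →
    B' = B

def TwoConnected {V : Type*} (G : SimpleGraph V) : Prop :=
  G.Connected ∧ ∀ v : V, (G.induce {u | u ≠ v}).Connected

def TwoEdgeConnected {V : Type*} (G : SimpleGraph V) : Prop :=
  G.Connected ∧ ∀ e ∈ G.edgeSet, (G.deleteEdges {e}).Connected

lemma keynum {n k L s : ℕ} (hn : 3 ≤ n) (hk : k = (n+1)/2) (hL : L ≤ n/2)
    {a b : ℕ} (ha : a < L) (hb : b < L)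
    (h : ((a + s) % n) % k = ((b + s) % n) % k) : a = b := by
  have hn0 : 0 < n := by omega
  have hk0 : 0 < k := by omega
  set x := (a + s) % n with hxdef
  set y := (b + s) % n with hydef
  have hx : x < n := Nat.mod_lt _ hn0
  have hy : y < n := Nat.mod_lt _ hn0
  have h2k : n ≤ 2 * k := by omega
  -- x and y in terms of their residues
  have hxr : x = x % k ∨ x = x % k + k := by
    rcases Nat.lt_or_ge x k with h'|h'
    · left; exact (Nat.mod_eq_of_lt h').symm
    · right
      have : x % k = x - k := by
        rw [Nat.mod_eq_sub_mod h', Nat.mod_eq_of_lt (by omega)]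
      omega
  have hyr : y = y % k ∨ y = y % k + k := by
    rcases Nat.lt_or_ge y k with h'|h'
    · left; exact (Nat.mod_eq_of_lt h').symm
    · right
      have : y % k = y - k := by
        rw [Nat.mod_eq_sub_mod h', Nat.mod_eq_of_lt (by omega)]
      omega
  have hxk : x % k < k := Nat.mod_lt _ hk0
  have hyk : y % k < k := Nat.mod_lt _ hk0
  rcases le_total a b with hab | hab
  · have hrel : y = (x + (b - a)) % n := by
      rw [hxdef, hydef, Nat.mod_add_mod]
      congr 1
      omega
    have hcase : y = x + (b - a) ∨ y + n = x + (b - a) := by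
      rcases Nat.lt_or_ge (x + (b - a)) n with h'|h'
      · left; rw [hrel]; exact (Nat.mod_eq_of_lt h')
      · right
        have hlt : x + (b - a) - n < n := by omega
        rw [hrel, Nat.mod_eq_sub_mod h', Nat.mod_eq_of_lt hlt]
        omega
    have hh := h
    generalize x % k = xr at hxr hxk hh
    generalize y % k = yr at hyr hyk hh
    omega
  · have hrel : x = (y + (a - b)) % n := by
      rw [hxdef, hydef, Nat.mod_add_mod]
      congr 1
      omega
    have hcase : x = y + (a - b) ∨ x + n = y + (a - b) := by
      rcases Nat.lt_or_ge (y + (a - b)) n with h'|h'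
      · left; rw [hrel]; exact (Nat.mod_eq_of_lt h')
      · right
        have hlt : y + (a - b) - n < n := by omega
        rw [hrel, Nat.mod_eq_sub_mod h', Nat.mod_eq_of_lt hlt]
        omega
    have hh := h
    generalize x % k = xr at hxr hxk hh
    generalize y % k = yr at hyr hyk hh
    omega

lemma rainbow_helper {α : Type*} [DecidableEq α] {n k : ℕ} (hn : 3 ≤ n) (hk : k = (n+1)/2)
    (P : List α) (hP : P.Nodup) (hPl : P.length = n) (E : List α) (s : ℕ)
    (hidx : ∀ j (hj : j < E.length),
      E[j] = P[(j + s) % n]'(by rw [hPl]; exact Nat.mod_lt _ (by omega)))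
    (hE : E.length ≤ n / 2)
    (c : α → Fin k) (hc : ∀ e, (c e : ℕ) = P.idxOf e % k) :
    (E.map c).Nodup := by
  rw [List.nodup_iff_injective_get]
  intro i j hij
  have hi : (i : ℕ) < E.length := by simpa using i.2
  have hj : (j : ℕ) < E.length := by simpa using j.2
  have hval : (c (E[(i:ℕ)]) : ℕ) = (c (E[(j:ℕ)]) : ℕ) := by
    have := hij
    simp only [List.get_eq_getElem, List.getElem_map] at this
    rw [this]
  rw [hc, hc, hidx _ hi, hidx _ hj,
    hP.idxOf_getElem _ _, hP.idxOf_getElem _ _] at hval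
  exact Fin.ext (keynum hn hk hE hi hj hval)

theorem rc_hamiltonian {V : Type*} [Fintype V] [DecidableEq V] (G : SimpleGraph V)
    (hn : 3 ≤ Fintype.card V) (hham : G.IsHamiltonian) :
    rc G ≤ (Fintype.card V + 1) / 2 := by
  classical
  set n := Fintype.card V with hndef
  set k := (n + 1) / 2 with hkdef
  have hk0 : 0 < k := by omega
  obtain ⟨v, p, hp⟩ := hham (by omega)
  have hPnd : p.edges.Nodup := hp.isCycle.isTrail.edges_nodup
  have hPl : p.edges.length = n := by
    rw [Walk.length_edges, hp.length_eq]
  let c : Sym2 V → Fin k := fun e => ⟨p.edges.idxOf e % k, Nat.mod_lt _ hk0⟩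
  have hc : ∀ e, ((c e : Fin k) : ℕ) = p.edges.idxOf e % k := fun e => rfl
  apply Nat.sInf_le
  refine ⟨c, fun u w => ?_⟩
  by_cases huw : u = w
  · subst huw
    exact ⟨Walk.nil, Walk.IsPath.nil, by simp⟩
  -- rotate the cycle to start at u
  have hu : u ∈ p.support := hp.mem_support u
  set q := p.rotate u hu with hq
  have hqc : q.IsCycle := hp.isCycle.rotate hu
  have hwp : w ∈ p.support.tail := by
    rw [← Walk.support_tail_of_not_nil p hp.isCycle.not_nil]
    exact hp.isHamiltonian_tail.mem_support w
  have hw : w ∈ q.support := by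
    apply List.mem_of_mem_tail
    exact ((Walk.support_rotate p u hu).perm.mem_iff).2 hwp
  set t := q.takeUntil w hw with ht
  set d := q.dropUntil w hw with hd
  have hspec : t.append d = q := q.take_spec hw
  have hedges : t.edges ++ d.edges = q.edges := by
    rw [← Walk.edges_append, hspec]
  have htail : t.support.tail ++ d.support.tail = q.support.tail := by
    rw [← Walk.tail_support_append, hspec]
  have hnod : (t.support.tail ++ d.support.tail).Nodup := by
    rw [htail]; exact hqc.support_nodup
  rw [List.nodup_append'] at hnod
  obtain ⟨hnt, hnd, hdisj⟩ := hnod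
  have hwt : w ∈ t.support.tail := Walk.end_mem_tail_support_of_ne huw t
  have hud : u ∈ d.support.tail := Walk.end_mem_tail_support_of_ne (Ne.symm huw) d
  have htp : t.IsPath := by
    rw [Walk.isPath_def, Walk.support_eq_cons, List.nodup_cons]
    exact ⟨fun hmem => hdisj hmem hud, hnt⟩
  have hdp : d.IsPath := by
    rw [Walk.isPath_def, Walk.support_eq_cons, List.nodup_cons]
    exact ⟨fun hmem => hdisj hwt hmem, hnd⟩
  -- rotation of edges
  obtain ⟨m, hm⟩ : ∃ m, p.edges.rotate m = q.edges := (p.rotate_edges u hu).symm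
  have hql : q.edges.length = n := by rw [← hm, List.length_rotate, hPl]
  have hlen : t.edges.length + d.edges.length = n := by
    rw [← hql, ← hedges, List.length_append]
  have hqidx : ∀ j (hj : j < q.edges.length),
      q.edges[j] = p.edges[(j + m) % n]'(by rw [hPl]; exact Nat.mod_lt _ (by omega)) := by
    intro j hj
    rw [List.getElem_of_eq hm.symm hj, List.getElem_rotate]
    simp [hPl]
  by_cases hcase : t.edges.length ≤ n / 2
  · refine ⟨t, htp, ?_⟩
    refine rainbow_helper hn hkdef p.edges hPnd hPl t.edges m ?_ hcase c hc
    intro j hj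
    have hj' : j < q.edges.length := by omega
    rw [← hqidx j hj']
    rw [List.getElem_of_eq hedges.symm hj']
    exact (List.getElem_append_left hj).symm
  · refine ⟨d.reverse, hdp.reverse, ?_⟩
    rw [Walk.edges_reverse, List.map_reverse, List.nodup_reverse]
    refine rainbow_helper hn hkdef p.edges hPnd hPl d.edges (t.edges.length + m)
      ?_ (by omega) c hc
    intro j hj
    have hj' : t.edges.length + j < q.edges.length := by omega
    have h1 : q.edges[t.edges.length + j]'hj' = d.edges[j] := by
      rw [List.getElem_of_eq hedges.symm hj']
      rw [List.getElem_append_right (by omega)]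
      congr 1
      omega
    rw [← h1, hqidx _ hj']
    congr 1
    congr 1
    omega
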